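/- Let (T_n)_{n ∈ ℕ} be a sequence of trees with T_0 = 2^{<ω} (the full binary tree) and, for each n, either T_{n+1} = Nar(T_n) or T_{n+1} = T_n⟦k⟧ for some k ∈ ℕ. Suppose that T_{n+1} is of the form T_n⟦k⟧ for infinitely many n. Then each stem(T_n) is an initial segment of stem(T_{n+1}), the lengths |stem(T_n)| tend to infinity, and ⋂_{n ∈ ℕ} [T_n] is the singleton {A}, where A ∈ 2^ω is the unique sequence extending every stem(T_n). -/

import Mathlib

open scoped Classical

/-- `σ` is an initial segment of the infinite binary sequence `X`. -/
def PrefixOf (σ : List Bool) (X : ℕ → Bool) : Prop :=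
  σ = (List.range σ.length).map X

/-- A tree is a set of finite binary strings closed under initial segments. -/
def IsTree (T : Set (List Bool)) : Prop :=
  ∀ s t : List Bool, s <+: t → t ∈ T → s ∈ T

/-- `[T]`, the set of infinite paths of `T`: those `X` all of whose initial segments
are in `T`. -/
def treePaths (T : Set (List Bool)) : Set (ℕ → Bool) :=
  {X | ∀ n : ℕ, (List.range n).map X ∈ T}

/-- `T` is pruned: every node has a proper extension in `T`. -/
def Pruned (T : Set (List Bool)) : Prop :=
  ∀ s ∈ T, ∃ t ∈ T, s <+: t ∧ s ≠ t

/-- Two strings are incomparable if neither is an initial segment of the other. -/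
def Incomparable (s t : List Bool) : Prop := ¬ s <+: t ∧ ¬ t <+: s

/-- `T` is perfect: every node of `T` has two incomparable extensions in `T`. -/
def PerfectTree (T : Set (List Bool)) : Prop :=
  ∀ s ∈ T, ∃ t₁ ∈ T, ∃ t₂ ∈ T, s <+: t₁ ∧ s <+: t₂ ∧ Incomparable t₁ t₂

/-- A (nonempty) perfect pruned tree. -/
def PPTree (T : Set (List Bool)) : Prop :=
  T.Nonempty ∧ IsTree T ∧ Pruned T ∧ PerfectTree T

/-- `s` is a branching node of `T`: both children `s⌢0` and `s⌢1` are in `T`. -/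
def Branching (T : Set (List Bool)) (s : List Bool) : Prop :=
  s ∈ T ∧ s ++ [false] ∈ T ∧ s ++ [true] ∈ T

/-- `s` is a shortest branching node of `T`. -/
def IsStem (T : Set (List Bool)) (s : List Bool) : Prop :=
  Branching T s ∧ ∀ t : List Bool, Branching T t → s.length ≤ t.length

/-- `stem T`: the shortest branching node of `T` (unique for a perfect pruned tree). -/
noncomputable def stem (T : Set (List Bool)) : List Bool :=
  if h : ∃ s, IsStem T s then h.choose else []

/-- The shortest branching node of `T` extending `ρ`
(unique for a perfect pruned tree when `ρ ∈ T`). -/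
noncomputable def nextBranch (T : Set (List Bool)) (ρ : List Bool) : List Bool :=
  if h : ∃ s : List Bool, ρ <+: s ∧ Branching T s ∧
      ∀ t : List Bool, ρ <+: t → Branching T t → s.length ≤ t.length then
    h.choose
  else ρ

/-- `ψ_T`, the order-preserving map onto the branching nodes of `T`:
`ψ_T(ε) = stem(T)` and `ψ_T(σ⌢i)` is the shortest branching node of `T`
extending `ψ_T(σ)⌢i`. -/
noncomputable def psi (T : Set (List Bool)) (σ : List Bool) : List Bool :=
  σ.foldl (fun τ i => nextBranch T (τ ++ [i])) (stem T)

/-- `τ` is of the form `ψ_T(σ⌢1)` for a string `σ` of odd length. -/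
def FormNode (T : Set (List Bool)) (τ : List Bool) : Prop :=
  ∃ σ : List Bool, Odd σ.length ∧ τ = psi T (σ ++ [true])

/-- The set of nodes `σ_k(T)`, `k ∈ ℕ`: the minimal nodes of `T` of the form
`ψ_T(σ⌢1)` for `σ` of odd length (no proper initial segment is of this form). -/
def sigmaSet (T : Set (List Bool)) : Set (List Bool) :=
  {τ | FormNode T τ ∧ ∀ ρ : List Bool, ρ <+: τ → ρ ≠ τ → ¬ FormNode T ρ}

/-- `Nar(T)`, the narrow subtree of `T`: the nodes lying on some path of `T`
passing through no `σ_k(T)`. -/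
def Nar (T : Set (List Bool)) : Set (List Bool) :=
  {τ | τ ∈ T ∧ ∃ X ∈ treePaths T, PrefixOf τ X ∧ ∀ ρ ∈ sigmaSet T, ¬ PrefixOf ρ X}

/-- `T⟦ρ⟧`, the full subtree of `T` issuing from `ρ`: the nodes of `T`
comparable with `ρ`. -/
def fullSub (T : Set (List Bool)) (ρ : List Bool) : Set (List Bool) :=
  {τ ∈ T | ρ <+: τ ∨ τ <+: ρ}


section Helpers

open List

lemma range_prefix_range {n m : ℕ} (h : n ≤ m) : List.range n <+: List.range m := by
  have := List.take_prefix n (List.range m)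
  rwa [List.take_range, min_eq_left h] at this

lemma eq_of_prefix_prefix {l1 l2 l3 : List Bool} (h1 : l1 <+: l3) (h2 : l2 <+: l3)
    (h : l1.length = l2.length) : l1 = l2 :=
  (List.prefix_of_prefix_length_le h1 h2 h.le).eq_of_length h

lemma snocPrefix_eq {δ : List Bool} {a b : Bool} {l : List Bool}
    (h1 : δ ++ [a] <+: l) (h2 : δ ++ [b] <+: l) : a = b := by
  have h3 : δ ++ [a] = δ ++ [b] := eq_of_prefix_prefix h1 h2 (by simp)
  simpa using h3

lemma prefix_trichotomy : ∀ s t : List Bool, s <+: t ∨ t <+: s ∨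
    ∃ δ a b, a ≠ b ∧ δ ++ [a] <+: s ∧ δ ++ [b] <+: t := by
  intro s
  induction s with
  | nil => intro t; left; exact List.nil_prefix
  | cons c s ih =>
    intro t
    cases t with
    | nil => right; left; exact List.nil_prefix
    | cons d t' =>
      by_cases h : c = d
      · subst h
        rcases ih t' with h1 | h1 | ⟨δ, a, b, hab, h1, h2⟩
        · left; exact List.cons_prefix_cons.mpr ⟨rfl, h1⟩
        · right; left; exact List.cons_prefix_cons.mpr ⟨rfl, h1⟩
        · right; right
          exact ⟨c :: δ, a, b, hab, by simpa using h1, by simpa using h2⟩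
      · right; right
        exact ⟨[], c, d, h, by simp, by simp⟩

lemma exists_snoc_prefix {p q : List Bool} (h : p <+: q) (hne : p ≠ q) :
    ∃ a, p ++ [a] <+: q := by
  obtain ⟨r, rfl⟩ := h
  cases r with
  | nil => simp at hne
  | cons a r => exact ⟨a, ⟨r, by simp⟩⟩

lemma List.IsPrefix.getD_eq' {p l : List Bool} (h : p <+: l) {k : ℕ} (hk : k < p.length) :
    p.getD k false = l.getD k false := by
  obtain ⟨r, rfl⟩ := h
  rw [List.getD_append p r false k hk]

lemma prefix_snoc_getD {p l : List Bool} (h : p <+: l) (hlt : p.length < l.length) :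
    p ++ [l.getD p.length false] <+: l := by
  obtain ⟨r, rfl⟩ := h
  cases r with
  | nil => simp at hlt
  | cons a r =>
    have hv : (p ++ a :: r).getD p.length false = a := by
      rw [List.getD_eq_getElem _ _ (by simp only [List.length_append, List.length_cons]; omega),
        List.getElem_append_right (le_refl p.length)]
      simp
    rw [hv]
    exact ⟨r, by simp⟩

/-- the initial segment of `X` of length `n`. -/
def seg (X : ℕ → Bool) (n : ℕ) : List Bool := (List.range n).map X

@[simp] lemma seg_length (X : ℕ → Bool) (n : ℕ) : (seg X n).length = n := by simp [seg]

lemma seg_mono (X : ℕ → Bool) {n m : ℕ} (h : n ≤ m) : seg X n <+: seg X m :=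
  (range_prefix_range h).map X

lemma prefixOf_iff_seg {σ : List Bool} {X : ℕ → Bool} :
    PrefixOf σ X ↔ σ = seg X σ.length := Iff.rfl

lemma prefixOf_prefix {σ : List Bool} {X : ℕ → Bool} {n : ℕ} (h : PrefixOf σ X)
    (hn : σ.length ≤ n) : σ <+: seg X n := by
  have h2 : seg X σ.length <+: seg X n := seg_mono X hn
  rwa [← prefixOf_iff_seg.mp h] at h2

lemma prefixOf_of_prefix {σ : List Bool} {X : ℕ → Bool} {n : ℕ}
    (h : σ <+: seg X n) : PrefixOf σ X := by
  have hlen : σ.length ≤ n := by simpa using h.length_le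
  have h2 := List.prefix_iff_eq_take.mp h
  show σ = seg X σ.length
  calc σ = (seg X n).take σ.length := h2
    _ = seg X σ.length := by
        simp only [seg, ← List.map_take, List.take_range, min_eq_left hlen]

lemma prefixOf_trans {τ σ : List Bool} {X : ℕ → Bool} (h : τ <+: σ) (h' : PrefixOf σ X) :
    PrefixOf τ X :=
  by
  have h2 : τ <+: seg X σ.length := by rw [← prefixOf_iff_seg.mp h']; exact h
  exact prefixOf_of_prefix h2

lemma prefixOf_snoc {σ : List Bool} {X : ℕ → Bool} (h : PrefixOf σ X) :
    PrefixOf (σ ++ [X σ.length]) X := by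
  show _ = seg X _
  have : seg X (σ.length + 1) = seg X σ.length ++ [X σ.length] := by
    simp [seg, List.range_succ]
  rw [show (σ ++ [X σ.length]).length = σ.length + 1 by simp, this,
    ← prefixOf_iff_seg.mp h]

lemma prefixOf_getD {σ : List Bool} {X : ℕ → Bool} (h : PrefixOf σ X) {k : ℕ}
    (hk : k < σ.length) : σ.getD k false = X k := by
  rw [prefixOf_iff_seg.mp h]
  rw [List.getD_eq_getElem _ _ (by simpa using hk)]
  simp [seg]

end Helpers

section SchemeSec

/-- A perfect tree scheme: `e (σ ++ [i])` extends `e σ ++ [i]`. -/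
def Scheme (e : List Bool → List Bool) : Prop := ∀ σ i, e σ ++ [i] <+: e (σ ++ [i])

/-- The tree generated by a scheme: downward closure of the range of `e`. -/
def Tr (e : List Bool → List Bool) : Set (List Bool) := {τ | ∃ σ, τ <+: e σ}

lemma mem_Tr {e : List Bool → List Bool} {τ σ : List Bool} (h : τ <+: e σ) : τ ∈ Tr e := ⟨σ, h⟩

lemma e_mem_Tr (e : List Bool → List Bool) (σ : List Bool) : e σ ∈ Tr e := ⟨σ, List.prefix_rfl⟩

lemma isTree_Tr (e : List Bool → List Bool) : IsTree (Tr e) := by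
  rintro s t hst ⟨σ, h⟩; exact ⟨σ, hst.trans h⟩

namespace Scheme

variable {e : List Bool → List Bool}

lemma mono_append (he : Scheme e) (σ r : List Bool) : e σ <+: e (σ ++ r) := by
  induction r using List.reverseRecOn with
  | nil => simp
  | append_singleton r i ih =>
    rw [← List.append_assoc]
    exact ih.trans ((List.prefix_append _ _).trans (he (σ ++ r) i))

lemma mono (he : Scheme e) {σ δ : List Bool} (h : σ <+: δ) : e σ <+: e δ := by
  obtain ⟨r, rfl⟩ := h; exact he.mono_append σ r

lemma len_add (he : Scheme e) (σ r : List Bool) :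
    (e σ).length + r.length ≤ (e (σ ++ r)).length := by
  induction r using List.reverseRecOn with
  | nil => simp
  | append_singleton r i ih =>
    have h1 : (e (σ ++ r)).length + 1 ≤ (e ((σ ++ r) ++ [i])).length := by
      have := (he (σ ++ r) i).length_le
      simpa using this
    rw [← List.append_assoc]
    simp only [List.length_append, List.length_singleton] at *
    omega

lemma code_prefix (he : Scheme e) {μ ρ : List Bool} (h : e μ <+: e ρ) : μ <+: ρ := by
  rcases prefix_trichotomy μ ρ with h1 | h1 | ⟨δ, a, b, hab, h1, h2⟩
  · exact h1
  · obtain ⟨r, rfl⟩ := h1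
    cases r with
    | nil => simp
    | cons a r =>
      have := he.len_add ρ (a :: r)
      have := h.length_le
      simp only [List.length_cons] at *
      omega
  · have ha : e δ ++ [a] <+: e ρ := ((he δ a).trans (he.mono h1)).trans h
    have hb : e δ ++ [b] <+: e ρ := (he δ b).trans (he.mono h2)
    exact absurd (snocPrefix_eq ha hb) hab

lemma code_snoc (he : Scheme e) {μ ρ : List Bool} {i : Bool}
    (h : e μ ++ [i] <+: e ρ) : μ ++ [i] <+: ρ := by
  have hμρ : μ <+: ρ := he.code_prefix ((List.prefix_append _ _).trans h)
  obtain ⟨r, rfl⟩ := hμρ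
  cases r with
  | nil =>
    have := h.length_le
    simp at this
  | cons j r =>
    have hj : e μ ++ [j] <+: e (μ ++ j :: r) := (he μ j).trans (he.mono ⟨r, by simp⟩)
    have : i = j := snocPrefix_eq h hj
    subst this
    exact ⟨r, by simp⟩

lemma mem_snoc (he : Scheme e) {τ μ : List Bool} {i : Bool} (hτ : τ ∈ Tr e)
    (h : e μ ++ [i] <+: τ) : ∃ ρ, μ ++ [i] <+: ρ ∧ τ <+: e ρ := by
  obtain ⟨ρ, hρ⟩ := hτ
  exact ⟨ρ, he.code_snoc (h.trans hρ), hρ⟩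

lemma comparable_snoc (he : Scheme e) {τ μ : List Bool} {i : Bool} (hτ : τ ∈ Tr e)
    (h : e μ ++ [i] <+: τ) : τ <+: e (μ ++ [i]) ∨ e (μ ++ [i]) <+: τ := by
  obtain ⟨ρ, h1, h2⟩ := he.mem_snoc hτ h
  exact List.prefix_or_prefix_of_prefix h2 (he.mono h1)

lemma comparable_root (he : Scheme e) {τ : List Bool} (hτ : τ ∈ Tr e) :
    τ <+: e [] ∨ e [] <+: τ := by
  obtain ⟨ρ, hρ⟩ := hτ
  exact List.prefix_or_prefix_of_prefix hρ (he.mono List.nil_prefix)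

lemma branching (he : Scheme e) (σ : List Bool) : Branching (Tr e) (e σ) :=
  ⟨e_mem_Tr e σ, mem_Tr (he σ false), mem_Tr (he σ true)⟩

lemma not_branching_below_root (he : Scheme e) {t : List Bool} (h2 : t <+: e [])
    (h3 : t ≠ e []) (hb : Branching (Tr e) t) : False := by
  have hlt : t.length < (e []).length := by
    rcases lt_or_eq_of_le h2.length_le with h | h
    · exact h
    · exact absurd (h2.eq_of_length h) h3
  have hc : ∀ b : Bool, t ++ [b] <+: e [] := by
    intro b
    have hmem : t ++ [b] ∈ Tr e := by
      rcases b with _ | _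
      exacts [hb.2.1, hb.2.2]
    rcases he.comparable_root hmem with h | h
    · exact h
    · have := h.length_le
      have heq : e [] = t ++ [b] := h.eq_of_length (by simp at this ⊢; omega)
      rw [heq]
    
  simpa using snocPrefix_eq (hc false) (hc true)

lemma not_branching_between (he : Scheme e) {t μ : List Bool} {i : Bool}
    (h1 : e μ ++ [i] <+: t) (h2 : t <+: e (μ ++ [i])) (h3 : t ≠ e (μ ++ [i]))
    (hb : Branching (Tr e) t) : False := by
  have hlt : t.length < (e (μ ++ [i])).length := by
    rcases lt_or_eq_of_le h2.length_le with h | h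
    · exact h
    · exact absurd (h2.eq_of_length h) h3
  have hc : ∀ b : Bool, t ++ [b] <+: e (μ ++ [i]) := by
    intro b
    have hmem : t ++ [b] ∈ Tr e := by
      rcases b with _ | _
      exacts [hb.2.1, hb.2.2]
    have hext : e μ ++ [i] <+: t ++ [b] := h1.trans (List.prefix_append t [b])
    rcases he.comparable_snoc hmem hext with h | h
    · exact h
    · have := h.length_le
      have heq : e (μ ++ [i]) = t ++ [b] := h.eq_of_length (by simp at this ⊢; omega)
      rw [heq]
  simpa using snocPrefix_eq (hc false) (hc true)

lemma isStem (he : Scheme e) : IsStem (Tr e) (e []) := by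
  refine ⟨he.branching [], ?_⟩
  intro t hb
  by_contra hlt
  push_neg at hlt
  rcases he.comparable_root hb.1 with h | h
  · exact he.not_branching_below_root h (fun heq => by rw [heq] at hlt; omega) hb
  · have := h.length_le; omega

lemma stem_eq (he : Scheme e) : stem (Tr e) = e [] := by
  have hex : ∃ s, IsStem (Tr e) s := ⟨e [], he.isStem⟩
  rw [stem, dif_pos hex]
  have hs := hex.choose_spec
  have h1 : hex.choose.length ≤ (e []).length := hs.2 _ (he.branching [])
  have h2 : (e []).length ≤ hex.choose.length := he.isStem.2 _ hs.1
  rcases he.comparable_root hs.1.1 with h | h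
  · exact h.eq_of_length (le_antisymm h1 h2)
  · exact (h.eq_of_length (le_antisymm h2 h1)).symm

lemma nextBranch_eq (he : Scheme e) (σ : List Bool) (i : Bool) :
    nextBranch (Tr e) (e σ ++ [i]) = e (σ ++ [i]) := by
  have hmin : ∀ t : List Bool, e σ ++ [i] <+: t → Branching (Tr e) t →
      (e (σ ++ [i])).length ≤ t.length := by
    intro t h1 hb
    by_contra hlt
    push_neg at hlt
    rcases he.comparable_snoc hb.1 h1 with h | h
    · exact he.not_branching_between h1 h (fun heq => by rw [heq] at hlt; omega) hb
    · have := h.length_le; omega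
  have hex : ∃ s : List Bool, (e σ ++ [i]) <+: s ∧ Branching (Tr e) s ∧
      ∀ t : List Bool, (e σ ++ [i]) <+: t → Branching (Tr e) t → s.length ≤ t.length :=
    ⟨e (σ ++ [i]), he σ i, he.branching _, hmin⟩
  rw [nextBranch, dif_pos hex]
  obtain ⟨hp, hb, hm⟩ := hex.choose_spec
  have l1 : hex.choose.length ≤ (e (σ ++ [i])).length := hm _ (he σ i) (he.branching _)
  have l2 : (e (σ ++ [i])).length ≤ hex.choose.length := hmin _ hp hb
  rcases he.comparable_snoc hb.1 hp with h | h
  · exact h.eq_of_length (le_antisymm l1 l2)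
  · exact (h.eq_of_length (le_antisymm l2 l1)).symm

lemma psi_eq (he : Scheme e) (σ : List Bool) : psi (Tr e) σ = e σ := by
  induction σ using List.reverseRecOn with
  | nil => exact he.stem_eq
  | append_singleton σ i ih =>
    have h1 : psi (Tr e) (σ ++ [i]) = nextBranch (Tr e) (psi (Tr e) σ ++ [i]) := by
      rw [psi, List.foldl_append]
      rfl
    rw [h1, ih, he.nextBranch_eq σ i]

lemma formNode_iff (he : Scheme e) {τ : List Bool} :
    FormNode (Tr e) τ ↔ ∃ σ : List Bool, Odd σ.length ∧ τ = e (σ ++ [true]) := by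
  constructor
  · rintro ⟨σ, h1, h2⟩
    exact ⟨σ, h1, by rw [h2, he.psi_eq]⟩
  · rintro ⟨σ, h1, h2⟩
    exact ⟨σ, h1, by rw [h2, he.psi_eq]⟩

lemma sigma_mem (he : Scheme e) {ρ : List Bool} (h : ρ ∈ sigmaSet (Tr e)) :
    ∃ σ : List Bool, Odd σ.length ∧ ρ = e (σ ++ [true]) := he.formNode_iff.mp h.1

end Scheme

end SchemeSec

section NarSec

/-- interleaving with zeros: `g σ` has the bits of `σ` at even positions and
`false` at odd positions. -/
def gI (σ : List Bool) : List Bool := σ.flatMap (fun b => [b, false])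

@[simp] lemma gI_nil : gI [] = [] := rfl

lemma gI_snoc (σ : List Bool) (i : Bool) : gI (σ ++ [i]) = gI σ ++ [i, false] := by
  simp [gI]

@[simp] lemma gI_length (σ : List Bool) : (gI σ).length = 2 * σ.length := by
  induction σ using List.reverseRecOn with
  | nil => simp
  | append_singleton σ i ih => rw [gI_snoc]; simp at ih ⊢; omega

/-- `w` has no “true” at an odd position (phrased via snoc-prefixes). -/
def OddZero (w : List Bool) : Prop :=
  ∀ δ : List Bool, Odd δ.length → δ ++ [true] <+: w → False

lemma OddZero.snoc_false {w : List Bool} (hw : OddZero w) : OddZero (w ++ [false]) := by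
  intro δ hδ h
  rcases lt_or_eq_of_le h.length_le with hlt | heq
  · exact hw δ hδ (List.prefix_of_prefix_length_le h (List.prefix_append w [false])
      (by simp at hlt ⊢ <;> omega))
  · have : δ ++ [true] = w ++ [false] := h.eq_of_length heq
    have := (List.append_inj' this (by simp at heq ⊢ <;> omega)).2
    simp at this

lemma OddZero.snoc_pair {w : List Bool} (hw : OddZero w) (heven : Even w.length)
    (i : Bool) : OddZero (w ++ [i, false]) := by
  have h1 : OddZero (w ++ [i]) := by
    intro δ hδ h
    rcases lt_or_eq_of_le h.length_le with hlt | heq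
    · exact hw δ hδ (List.prefix_of_prefix_length_le h (List.prefix_append w [i])
        (by simp at hlt ⊢ <;> omega))
    · have hlen : δ.length = w.length := by simp at heq <;> omega
      rw [hlen] at hδ
      exact (Nat.not_odd_iff_even.mpr heven) hδ
  have h2 := h1.snoc_false
  have : w ++ [i, false] = (w ++ [i]) ++ [false] := by simp
  rwa [← this] at h2

lemma oddZero_gI (σ : List Bool) : OddZero (gI σ) := by
  induction σ using List.reverseRecOn with
  | nil =>
    intro δ hδ h
    have := h.length_le
    simp at this
  | append_singleton σ i ih =>
    rw [gI_snoc]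
    exact ih.snoc_pair (by rw [gI_length]; exact even_two_mul _) i

lemma OddZero.append_replicate {w : List Bool} (hw : OddZero w) (k : ℕ) :
    OddZero (w ++ List.replicate k false) := by
  induction k with
  | zero => simpa using hw
  | succ k ih =>
    rw [List.replicate_succ', ← List.append_assoc]
    exact ih.snoc_false

namespace Scheme

variable {e : List Bool → List Bool}

lemma root_prefixOf (he : Scheme e) {X : ℕ → Bool} (hX : X ∈ treePaths (Tr e)) :
    PrefixOf (e []) X := by
  have hmem : seg X (e []).length ∈ Tr e := hX _
  obtain ⟨ρ, hρ⟩ := hmem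
  have h2 : e [] <+: e ρ := he.mono List.nil_prefix
  have h3 : seg X (e []).length = e [] := eq_of_prefix_prefix hρ h2 (by simp)
  exact prefixOf_iff_seg.mpr h3.symm

lemma step_prefixOf (he : Scheme e) {X : ℕ → Bool} {μ : List Bool}
    (hX : X ∈ treePaths (Tr e)) (h : PrefixOf (e μ) X) :
    PrefixOf (e (μ ++ [X (e μ).length])) X := by
  set i := X (e μ).length with hi
  set N := (e (μ ++ [i])).length with hN
  have hNle : (e μ).length + 1 ≤ N := by
    have := he.len_add μ [i]; simpa using this
  have hmem : seg X N ∈ Tr e := hX N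
  have hpre : e μ ++ [i] <+: seg X N := by
    have h1 : PrefixOf (e μ ++ [i]) X := prefixOf_snoc h
    exact prefixOf_prefix h1 (by simp; omega)
  obtain ⟨ρ, h1, h2⟩ := he.mem_snoc hmem hpre
  have h3 : e (μ ++ [i]) <+: e ρ := he.mono h1
  have h4 : seg X N = e (μ ++ [i]) := eq_of_prefix_prefix h2 h3 (by simp [hN])
  exact prefixOf_iff_seg.mpr h4.symm

lemma odd_not_prefixOf (he : Scheme e) {X : ℕ → Bool} (hX : X ∈ treePaths (Tr e))
    (havoid : ∀ ρ ∈ sigmaSet (Tr e), ¬ PrefixOf ρ X) {μ : List Bool}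
    (hμ : Odd μ.length) : ¬ PrefixOf (e (μ ++ [true])) X := by
  intro hpre
  have hP : ∃ j : ℕ, Odd j ∧ ∃ δ : List Bool, δ.length = j ∧ δ ++ [true] <+: μ ++ [true] :=
    ⟨μ.length, hμ, μ, rfl, List.prefix_rfl⟩
  classical
  obtain ⟨hodd, δ, hlen, hpref⟩ := Nat.find_spec hP
  refine havoid (e (δ ++ [true])) ⟨?_, ?_⟩ ?_
  · exact he.formNode_iff.mpr ⟨δ, hlen ▸ hodd, rfl⟩
  · intro π hπ hne hform
    obtain ⟨δ', hodd', rfl⟩ := he.formNode_iff.mp hform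
    have hcode : δ' ++ [true] <+: δ ++ [true] := he.code_prefix hπ
    have hne' : δ' ++ [true] ≠ δ ++ [true] := fun h => hne (by rw [h])
    have hlt : δ'.length < δ.length := by
      rcases lt_or_eq_of_le hcode.length_le with h | h
      · simp at h; omega
      · exact absurd (hcode.eq_of_length h) hne'
    rw [hlen] at hlt
    exact Nat.find_min hP hlt ⟨hodd', δ', rfl, hcode.trans hpref⟩
  · exact prefixOf_trans (he.mono hpref) hpre

lemma exists_gI_prefixOf (he : Scheme e) {X : ℕ → Bool} (hX : X ∈ treePaths (Tr e))
    (havoid : ∀ ρ ∈ sigmaSet (Tr e), ¬ PrefixOf ρ X) :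
    ∀ m : ℕ, ∃ σ : List Bool, σ.length = m ∧ PrefixOf (e (gI σ)) X := by
  intro m
  induction m with
  | zero => exact ⟨[], rfl, by simpa using he.root_prefixOf hX⟩
  | succ m ih =>
    obtain ⟨σ, hlen, hσ⟩ := ih
    have h1 := he.step_prefixOf hX hσ
    set i := X (e (gI σ)).length with hi
    have h2 := he.step_prefixOf hX h1
    set j := X (e (gI σ ++ [i])).length with hj
    have hjf : j = false := by
      by_contra hjt
      have hjt : j = true := by rcases j with _ | _ <;> simp_all
      rw [hjt] at h2
      exact he.odd_not_prefixOf hX havoid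
        (by simp [Nat.odd_iff] <;> omega) h2
    rw [hjf] at h2
    refine ⟨σ ++ [i], by simp [hlen], ?_⟩
    rw [gI_snoc]
    have : gI σ ++ [i, false] = (gI σ ++ [i]) ++ [false] := by simp
    rw [this]
    exact h2

end Scheme

/-- The path through `Tr e` whose code is `gI σ` followed by zeros. -/
noncomputable def limPath (e : List Bool → List Bool) (σ : List Bool) : ℕ → Bool :=
  fun n => (e (gI σ ++ List.replicate (n + 1) false)).getD n false

namespace Scheme

variable {e : List Bool → List Bool}

lemma rep_mono (he : Scheme e) (σ : List Bool) {k k' : ℕ} (h : k ≤ k') :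
    e (gI σ ++ List.replicate k false) <+: e (gI σ ++ List.replicate k' false) := by
  apply he.mono
  have : List.replicate k' false = List.replicate k false ++ List.replicate (k' - k) false := by
    rw [← List.replicate_add]; congr 1; omega
  rw [this, ← List.append_assoc]
  exact List.prefix_append _ _

lemma rep_len (he : Scheme e) (σ : List Bool) (k : ℕ) :
    k ≤ (e (gI σ ++ List.replicate k false)).length := by
  have := he.len_add [] (gI σ ++ List.replicate k false)
  simp at this
  omega

lemma seg_limPath_prefix (he : Scheme e) (σ : List Bool) (n : ℕ) :
    seg (limPath e σ) n <+: e (gI σ ++ List.replicate n false) := by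
  induction n with
  | zero => simp [seg]
  | succ n ih =>
    have hstep : e (gI σ ++ List.replicate n false) <+:
        e (gI σ ++ List.replicate (n + 1) false) := he.rep_mono σ (by omega)
    have hseg : seg (limPath e σ) (n + 1) =
        seg (limPath e σ) n ++ [limPath e σ n] := by
      simp [seg, List.range_succ]
    have hpre : seg (limPath e σ) n <+: e (gI σ ++ List.replicate (n + 1) false) :=
      ih.trans hstep
    have hlt : (seg (limPath e σ) n).length <
        (e (gI σ ++ List.replicate (n + 1) false)).length := by
      have := he.rep_len σ (n + 1)
      simp; omega
    have := prefix_snoc_getD hpre hlt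
    rw [hseg]
    have hval : limPath e σ n =
        (e (gI σ ++ List.replicate (n + 1) false)).getD (seg (limPath e σ) n).length false := by
      simp [limPath]
    rw [hval]
    exact this

lemma limPath_mem (he : Scheme e) (σ : List Bool) : limPath e σ ∈ treePaths (Tr e) :=
  fun n => mem_Tr (he.seg_limPath_prefix σ n)

lemma limPath_prefixOf (he : Scheme e) {σ τ : List Bool} (h : τ <+: e (gI σ)) :
    PrefixOf τ (limPath e σ) := by
  have h2 : e (gI σ) <+: e (gI σ ++ List.replicate τ.length false) :=
    he.mono (List.prefix_append _ _)
  have h3 : τ <+: e (gI σ ++ List.replicate τ.length false) := h.trans h2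
  have h4 := he.seg_limPath_prefix σ τ.length
  exact prefixOf_iff_seg.mpr (eq_of_prefix_prefix h3 h4 (by simp))

lemma limPath_avoid (he : Scheme e) (σ : List Bool) :
    ∀ ρ ∈ sigmaSet (Tr e), ¬ PrefixOf ρ (limPath e σ) := by
  intro ρ hρ hpre
  obtain ⟨δ, hodd, rfl⟩ := he.sigma_mem hρ
  set N := (e (δ ++ [true])).length with hN
  have h1 : e (δ ++ [true]) <+: e (gI σ ++ List.replicate N false) := by
    have h2 : e (δ ++ [true]) = seg (limPath e σ) N := prefixOf_iff_seg.mp hpre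
    rw [h2]
    exact he.seg_limPath_prefix σ N
  have h2 : δ ++ [true] <+: gI σ ++ List.replicate N false := he.code_prefix h1
  exact ((oddZero_gI σ).append_replicate N) δ hodd h2

lemma nar_eq (he : Scheme e) : Nar (Tr e) = Tr (fun σ => e (gI σ)) := by
  ext τ
  constructor
  · rintro ⟨hτ, X, hX, hpre, havoid⟩
    obtain ⟨σ, hlen, hσ⟩ := he.exists_gI_prefixOf hX havoid τ.length
    have hge : τ.length ≤ (e (gI σ)).length := by
      have h1 := he.len_add [] (gI σ)
      simp at h1
      omega
    have h2 : τ <+: seg X (e (gI σ)).length := prefixOf_prefix hpre hge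
    rw [← prefixOf_iff_seg.mp hσ] at h2
    exact ⟨σ, h2⟩
  · rintro ⟨σ, hτ⟩
    exact ⟨⟨gI σ, hτ⟩, limPath e σ, he.limPath_mem σ, he.limPath_prefixOf hτ,
      he.limPath_avoid σ⟩

lemma comp_gI (he : Scheme e) : Scheme (fun σ => e (gI σ)) := by
  intro σ i
  simp only
  rw [gI_snoc]
  have h1 : e (gI σ) ++ [i] <+: e (gI σ ++ [i]) := he _ i
  have h2 : e (gI σ ++ [i]) <+: e ((gI σ ++ [i]) ++ [false]) := he.mono (List.prefix_append _ _)
  have h3 : gI σ ++ [i, false] = (gI σ ++ [i]) ++ [false] := by simp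
  rw [h3]
  exact h1.trans h2

lemma fullSub_eq (he : Scheme e) (μ : List Bool) :
    fullSub (Tr e) (e μ) = Tr (fun σ => e (μ ++ σ)) := by
  ext τ
  constructor
  · rintro ⟨hτ, hcomp⟩
    rcases hcomp with h | h
    · rcases eq_or_ne (e μ) τ with rfl | hne
      · exact ⟨[], by simp⟩
      · obtain ⟨a, ha⟩ := exists_snoc_prefix h hne
        obtain ⟨ρ, h1, h2⟩ := he.mem_snoc hτ ha
        have hμρ : μ <+: ρ := (List.prefix_append μ [a]).trans h1
        obtain ⟨r, rfl⟩ := hμρ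
        exact ⟨r, h2⟩
    · exact ⟨[], by simpa using h⟩
  · rintro ⟨σ, h⟩
    refine ⟨⟨μ ++ σ, h⟩, ?_⟩
    rcases List.prefix_or_prefix_of_prefix h (he.mono (List.prefix_append μ σ)) with h1 | h1
    · exact Or.inr h1
    · exact Or.inl h1

lemma comp_append (he : Scheme e) (μ : List Bool) : Scheme (fun σ => e (μ ++ σ)) := by
  intro σ i
  simp only
  have := he (μ ++ σ) i
  rwa [List.append_assoc] at this

end Scheme

end NarSec

section MainSec

lemma stem_prefix_of_subset {e f : List Bool → List Bool} (he : Scheme e) (hf : Scheme f)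
    (hsub : Tr f ⊆ Tr e) : stem (Tr e) <+: stem (Tr f) := by
  rw [he.stem_eq, hf.stem_eq]
  have hb : Branching (Tr e) (f []) := by
    obtain ⟨h1, h2, h3⟩ := hf.branching []
    exact ⟨hsub h1, hsub h2, hsub h3⟩
  have hlen : (e []).length ≤ (f []).length := he.isStem.2 _ hb
  rcases he.comparable_root (hsub (e_mem_Tr f [])) with h | h
  · have heq := h.eq_of_length (le_antisymm h.length_le hlen)
    rw [← heq]
  · exact h

end MainSec

/-- Let `T_0 = 2^{<ω}` and let each `T_{n+1}` be either `Nar(T_n)` or a full subtree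
`T_n⟦k⟧` (i.e. `fullSub (T n) ρ` for some `ρ = σ_k(T_n) ∈ sigmaSet (T n)`), with the
latter happening for infinitely many `n`.  Then each `stem(T_n)` is an initial segment
of `stem(T_{n+1})`, the lengths `|stem(T_n)|` tend to infinity, and `⋂_n [T_n]` is the
singleton `{A}`, where `A` is the unique sequence extending every `stem(T_n)`. -/
theorem stmt14 (T : ℕ → Set (List Bool))
    (h0 : T 0 = Set.univ)
    (hstep : ∀ n : ℕ,
      T (n + 1) = Nar (T n) ∨ ∃ ρ ∈ sigmaSet (T n), T (n + 1) = fullSub (T n) ρ)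
    (hinf : {n : ℕ | ∃ ρ ∈ sigmaSet (T n), T (n + 1) = fullSub (T n) ρ}.Infinite) :
    (∀ n : ℕ, stem (T n) <+: stem (T (n + 1))) ∧
      Filter.Tendsto (fun n => (stem (T n)).length) Filter.atTop Filter.atTop ∧
      ∃ A : ℕ → Bool, (∀ n : ℕ, PrefixOf (stem (T n)) A) ∧
        (∀ B : ℕ → Bool, (∀ n : ℕ, PrefixOf (stem (T n)) B) → B = A) ∧
        (⋂ n : ℕ, treePaths (T n)) = {A} := by
  classical
  have hsub : ∀ n, T (n + 1) ⊆ T n := by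
    intro n
    rcases hstep n with h | ⟨ρ, _, h⟩
    · rw [h]; exact fun τ hτ => hτ.1
    · rw [h]; exact fun τ hτ => hτ.1
  have hsub' : ∀ n m : ℕ, n ≤ m → T m ⊆ T n := by
    intro n m h
    induction h with
    | refl => exact le_refl _
    | @step k hk ih => exact fun τ hτ => ih (hsub k hτ)
  have inv : ∀ n, ∃ e, Scheme e ∧ T n = Tr e := by
    intro n
    induction n with
    | zero =>
      refine ⟨id, fun σ i => List.prefix_rfl, ?_⟩
      rw [h0]; ext τ
      simp only [Set.mem_univ, true_iff]
      exact ⟨τ, List.prefix_rfl⟩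
    | succ n ih =>
      obtain ⟨e, he, hT⟩ := ih
      by_cases hfs : ∃ ρ ∈ sigmaSet (T n), T (n + 1) = fullSub (T n) ρ
      · obtain ⟨ρ, hρ, heq⟩ := hfs
        rw [hT] at hρ
        obtain ⟨σ, hodd, rfl⟩ := he.sigma_mem hρ
        exact ⟨_, he.comp_append (σ ++ [true]), by rw [heq, hT, he.fullSub_eq]⟩
      · have h := (hstep n).resolve_right hfs
        exact ⟨_, he.comp_gI, by rw [h, hT, he.nar_eq]⟩
  choose E hE1 hE2 using inv
  have hstem : ∀ n, stem (T n) = E n [] := fun n => by rw [hE2 n, (hE1 n).stem_eq]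
  have hpref : ∀ n, stem (T n) <+: stem (T (n + 1)) := by
    intro n
    have h := stem_prefix_of_subset (hE1 n) (hE1 (n + 1))
      (by rw [← hE2 n, ← hE2 (n + 1)]; exact hsub n)
    rwa [← hE2 n, ← hE2 (n + 1)] at h
  have hgrow : ∀ n, (∃ ρ ∈ sigmaSet (T n), T (n + 1) = fullSub (T n) ρ) →
      (stem (T n)).length + 2 ≤ (stem (T (n + 1))).length := by
    rintro n ⟨ρ, hρ, heq⟩
    have hT := hE2 n
    have he := hE1 n
    rw [hT] at hρ
    obtain ⟨σ, hodd, rfl⟩ := he.sigma_mem hρ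
    have hTr : T (n + 1) = Tr (fun τ => E n ((σ ++ [true]) ++ τ)) := by
      rw [heq, hT, he.fullSub_eq]
    have hs2 : stem (T (n + 1)) = E n ((σ ++ [true]) ++ []) := by
      rw [hTr, (he.comp_append _).stem_eq]
    rw [hstem n, hs2]
    have hl := he.len_add [] (σ ++ [true])
    obtain ⟨k, hk⟩ := hodd
    simp only [List.nil_append, List.append_nil, List.length_append,
      List.length_singleton] at hl ⊢
    omega
  have hmono : Monotone (fun n => (stem (T n)).length) :=
    monotone_nat_of_le_succ (fun n => (hpref n).length_le)
  have hunb : ∀ b, ∃ a, b ≤ (stem (T a)).length := by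
    intro b
    induction b with
    | zero => exact ⟨0, Nat.zero_le _⟩
    | succ b ih =>
      obtain ⟨a, ha⟩ := ih
      obtain ⟨m, hm, hlt⟩ := hinf.exists_gt a
      have h1 := hgrow m hm
      have h2 : (stem (T a)).length ≤ (stem (T m)).length := hmono hlt.le
      exact ⟨m + 1, by omega⟩
  have htend : Filter.Tendsto (fun n => (stem (T n)).length) Filter.atTop Filter.atTop :=
    Filter.tendsto_atTop_atTop_of_monotone hmono hunb
  have hNex : ∀ k, ∃ n, k < (stem (T n)).length := fun k => hunb (k + 1)
  set A : ℕ → Bool := fun k => (stem (T (hNex k).choose)).getD k false with hA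
  have hchain : ∀ n m : ℕ, n ≤ m → stem (T n) <+: stem (T m) := by
    intro n m h
    induction h with
    | refl => exact List.prefix_rfl
    | @step k hk ih => exact ih.trans (hpref k)
  have hval : ∀ n k, k < (stem (T n)).length → (stem (T n)).getD k false = A k := by
    intro n k hk
    have hm := (hNex k).choose_spec
    rcases le_total n (hNex k).choose with h | h
    · exact (hchain n _ h).getD_eq' hk
    · exact ((hchain _ n h).getD_eq' hm).symm
  have hprefA : ∀ n, PrefixOf (stem (T n)) A := by
    intro n
    show stem (T n) = seg A (stem (T n)).length
    apply List.ext_getElem (by simp)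
    intro k h1 h2
    have h3 := hval n k h1
    have l1 : (stem (T n))[k] = (stem (T n)).getD k false :=
      (List.getD_eq_getElem _ _ h1).symm
    have l2 : (seg A (stem (T n)).length)[k]'h2 = A k := by
      simp [seg]
    exact l1.trans (h3.trans l2.symm)
  have huniq : ∀ B : ℕ → Bool, (∀ n, PrefixOf (stem (T n)) B) → B = A := by
    intro B hB
    funext k
    obtain ⟨n, hn⟩ := hNex k
    have h1 := prefixOf_getD (hB n) hn
    have h2 := prefixOf_getD (hprefA n) hn
    exact h1.symm.trans h2
  refine ⟨hpref, htend, A, hprefA, huniq, ?_⟩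
  ext X
  simp only [Set.mem_iInter, Set.mem_singleton_iff]
  constructor
  · intro hX
    apply huniq
    intro n
    set L := (stem (T n)).length with hL
    have hmem : seg X L ∈ T n := hX n L
    rw [hE2 n] at hmem
    have hlen : (seg X L).length = (E n []).length := by
      rw [seg_length, hL, hstem n]
    have heq : seg X L = E n [] := by
      rcases (hE1 n).comparable_root hmem with h | h
      · exact h.eq_of_length hlen
      · exact (h.eq_of_length hlen.symm).symm
    show stem (T n) = seg X L
    rw [hstem n]
    exact heq.symm
  · rintro rfl
    intro n m
    obtain ⟨n₀, hn₀⟩ := hNex m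
    have h2 : m ≤ (stem (T (max n n₀))).length :=
      le_trans hn₀.le (hmono (le_max_right n n₀))
    have h4 : seg A m <+: seg A (stem (T (max n n₀))).length := seg_mono A h2
    rw [← prefixOf_iff_seg.mp (hprefA (max n n₀))] at h4
    have h5 : stem (T (max n n₀)) ∈ T (max n n₀) := by
      rw [hstem (max n n₀), hE2 (max n n₀)]
      exact e_mem_Tr _ []
    have h6 : stem (T (max n n₀)) ∈ T n := hsub' n (max n n₀) (le_max_left n n₀) h5
    have h7 : IsTree (T n) := by rw [hE2 n]; exact isTree_Tr _
    exact h7 _ _ h4 h6
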